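/- Let k ≥ 0 be an integer and let σ ⊆ ℤ² be a finite nonempty set. Then σ has ℓ¹ diameter at most k (i.e. σ is a simplex of VR(ℤ²;k)) if and only if the intersection of the open ℓ¹ balls ⋂_{v∈σ} B_{ℝ²}(v, (k+1)/2) in ℝ² is nonempty. -/
import Mathlib


/-- The ℓ¹ metric on `ℤ × ℤ`. -/
def dZ2 (x y : ℤ × ℤ) : ℤ := |x.1 - y.1| + |x.2 - y.2|

theorem stmt2 (k : ℤ) (hk : 0 ≤ k) (σ : Finset (ℤ × ℤ)) (hne : σ.Nonempty) :
    (∀ x ∈ σ, ∀ y ∈ σ, dZ2 x y ≤ k) ↔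
      (⋂ v ∈ σ,
        {p : ℝ × ℝ | |p.1 - ((v : ℤ × ℤ).1 : ℝ)| + |p.2 - ((v : ℤ × ℤ).2 : ℝ)|
          < ((k : ℝ) + 1) / 2}).Nonempty := by
  constructor
  · intro h
    set U := σ.image (fun v : ℤ × ℤ => v.1 + v.2) with hU
    set W := σ.image (fun v : ℤ × ℤ => v.1 - v.2) with hW
    have hUne : U.Nonempty := hne.image _
    have hWne : W.Nonempty := hne.image _
    set a : ℝ := (((U.max' hUne : ℤ) : ℝ) + ((U.min' hUne : ℤ) : ℝ)) / 2 with ha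
    set b : ℝ := (((W.max' hWne : ℤ) : ℝ) + ((W.min' hWne : ℤ) : ℝ)) / 2 with hb
    have hspreadU : (U.max' hUne : ℤ) - U.min' hUne ≤ k := by
      obtain ⟨x, hx, hxe⟩ := Finset.mem_image.mp (U.max'_mem hUne)
      obtain ⟨y, hy, hye⟩ := Finset.mem_image.mp (U.min'_mem hUne)
      have hd := h x hx y hy
      unfold dZ2 at hd
      rcases abs_cases (x.1 - y.1) with ⟨h1, h1'⟩ | ⟨h1, h1'⟩ <;>
        rcases abs_cases (x.2 - y.2) with ⟨h2, h2'⟩ | ⟨h2, h2'⟩ <;>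
        rw [← hxe, ← hye] <;> linarith
    have hspreadW : (W.max' hWne : ℤ) - W.min' hWne ≤ k := by
      obtain ⟨x, hx, hxe⟩ := Finset.mem_image.mp (W.max'_mem hWne)
      obtain ⟨y, hy, hye⟩ := Finset.mem_image.mp (W.min'_mem hWne)
      have hd := h x hx y hy
      unfold dZ2 at hd
      rcases abs_cases (x.1 - y.1) with ⟨h1, h1'⟩ | ⟨h1, h1'⟩ <;>
        rcases abs_cases (x.2 - y.2) with ⟨h2, h2'⟩ | ⟨h2, h2'⟩ <;>
        rw [← hxe, ← hye] <;> linarith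
    refine ⟨((a + b) / 2, (a - b) / 2), ?_⟩
    simp only [Set.mem_iInter, Set.mem_setOf_eq]
    intro v hv
    have hvU : v.1 + v.2 ∈ U := Finset.mem_image_of_mem _ hv
    have hvW : v.1 - v.2 ∈ W := Finset.mem_image_of_mem _ hv
    have h1 : (v.1 + v.2 : ℤ) ≤ U.max' hUne := Finset.le_max' _ _ hvU
    have h2 : (U.min' hUne : ℤ) ≤ v.1 + v.2 := Finset.min'_le _ _ hvU
    have h3 : (v.1 - v.2 : ℤ) ≤ W.max' hWne := Finset.le_max' _ _ hvW
    have h4 : (W.min' hWne : ℤ) ≤ v.1 - v.2 := Finset.min'_le _ _ hvW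
    -- real versions
    have h1' : ((v.1 : ℝ) + v.2) ≤ ((U.max' hUne : ℤ) : ℝ) := by exact_mod_cast h1
    have h2' : ((U.min' hUne : ℤ) : ℝ) ≤ (v.1 : ℝ) + v.2 := by exact_mod_cast h2
    have h3' : ((v.1 : ℝ) - v.2) ≤ ((W.max' hWne : ℤ) : ℝ) := by exact_mod_cast h3
    have h4' : ((W.min' hWne : ℤ) : ℝ) ≤ (v.1 : ℝ) - v.2 := by exact_mod_cast h4
    have hsU : ((U.max' hUne : ℤ) : ℝ) - ((U.min' hUne : ℤ) : ℝ) ≤ (k : ℝ) := by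
      exact_mod_cast hspreadU
    have hsW : ((W.max' hWne : ℤ) : ℝ) - ((W.min' hWne : ℤ) : ℝ) ≤ (k : ℝ) := by
      exact_mod_cast hspreadW
    rcases abs_cases ((a + b) / 2 - (v.1 : ℝ)) with ⟨e1, _⟩ | ⟨e1, _⟩ <;>
      rcases abs_cases ((a - b) / 2 - (v.2 : ℝ)) with ⟨e2, _⟩ | ⟨e2, _⟩ <;>
      rw [e1, e2] <;> rw [ha, hb] at * <;>
      push_cast at * <;> linarith
  · intro ⟨p, hp⟩ x hx y hy
    simp only [Set.mem_iInter, Set.mem_setOf_eq] at hp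
    have hx' := hp x hx
    have hy' := hp y hy
    have key : ((dZ2 x y : ℤ) : ℝ) < (k : ℝ) + 1 := by
      unfold dZ2
      push_cast
      have t1 : |(x.1 : ℝ) - y.1| ≤ |p.1 - x.1| + |p.1 - y.1| := by
        calc |(x.1 : ℝ) - y.1| ≤ |(x.1 : ℝ) - p.1| + |p.1 - y.1| := abs_sub_le _ _ _
        _ = |p.1 - x.1| + |p.1 - y.1| := by rw [abs_sub_comm]
      have t2 : |(x.2 : ℝ) - y.2| ≤ |p.2 - x.2| + |p.2 - y.2| := by
        calc |(x.2 : ℝ) - y.2| ≤ |(x.2 : ℝ) - p.2| + |p.2 - y.2| := abs_sub_le _ _ _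
        _ = |p.2 - x.2| + |p.2 - y.2| := by rw [abs_sub_comm]
      linarith
    have : dZ2 x y < k + 1 := by exact_mod_cast key
    omega
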